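/- For R ∈ SO(3) and p^r, p^f ∈ ℝ³ with p^f ≠ p^r, define H = Rᵀ[(p^f − p^r)^∧, −I₃, I₃] (a 3×9 matrix, acting on error coordinates (δθ, δp^r, δp^f)). Then the 9×6 matrix N = [[I₃, 0], [-(p^r)^∧, I₃], [-(p^f)^∧, I₃]] satisfies H·N = 0. -/

import Mathlib

open Matrix

/-- The skew-symmetric (cross-product) matrix of v ∈ ℝ³. -/
def skew (v : Fin 3 → ℝ) : Matrix (Fin 3) (Fin 3) ℝ :=
  !![0, -v 2, v 1; v 2, 0, -v 0; -v 1, v 0, 0]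

/-- The observation Jacobian of the relative measurement z = Rᵀ(p^f − p^r) of 3D
point-feature SLAM in the standard atlas: H = Rᵀ[(p^f − p^r)^∧, −I₃, I₃]. -/
def obsH (R : Matrix (Fin 3) (Fin 3) ℝ) (pr pf : Fin 3 → ℝ) :
    Matrix (Fin 3) (Fin 3 ⊕ (Fin 3 ⊕ Fin 3)) ℝ :=
  Rᵀ * Matrix.fromCols (skew (pf - pr)) (Matrix.fromCols (-1) 1)

/-- The unobservable-subspace basis of 3D point-feature SLAM in the standard atlas. -/
def unobsN (pr pf : Fin 3 → ℝ) :
    Matrix (Fin 3 ⊕ (Fin 3 ⊕ Fin 3)) (Fin 3 ⊕ Fin 3) ℝ :=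
  Matrix.fromBlocks 1 0 (Matrix.fromRows (-(skew pr)) (-(skew pf)))
    (Matrix.fromRows 1 1)

/-- The observation Jacobian annihilates the unobservable-subspace basis: H·N = 0. -/
theorem obsH_mul_unobsN_eq_zero
    (R : Matrix (Fin 3) (Fin 3) ℝ)
    (hR : R ∈ Matrix.specialOrthogonalGroup (Fin 3) ℝ)
    (pr pf : Fin 3 → ℝ) (hne : pf ≠ pr) :
    obsH R pr pf * unobsN pr pf = 0 := by
  have h : (Matrix.fromCols (skew (pf - pr)) (Matrix.fromCols (-1) 1) :
      Matrix (Fin 3) (Fin 3 ⊕ (Fin 3 ⊕ Fin 3)) ℝ) * unobsN pr pf = 0 := by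
    ext i j
    fin_cases i <;> rcases j with j | j <;> fin_cases j <;>
      simp [Matrix.mul_apply, Fintype.sum_sum_type, Fin.sum_univ_succ, unobsN, skew,
        Matrix.fromBlocks, Matrix.fromCols, Matrix.one_apply] <;> ring
  rw [obsH, Matrix.mul_assoc, h, Matrix.mul_zero]
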